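/- Let a, b, c be pairwise distinct real numbers and let f(x) = x + (x − a)(x − b)(x − c) be a cubic map with positive leading coefficient (M > 0) whose fixed points are exactly a, b, c. Then at most one of the fixed points a, b, c is attracting, in the sense that |f′| < 1 can hold at no more than one of the three points. -/

import Mathlib

lemma cubic_deriv (a b c x : ℝ) :
    deriv (fun x => x + (x - a) * (x - b) * (x - c)) x =
      1 + ((x - b) * (x - c) + (x - a) * (x - c) + (x - a) * (x - b)) := by
  have h1 : HasDerivAt (fun y : ℝ => (y - a) * (y - b) * (y - c))
      ((1 * (x - b) + (x - a) * 1) * (x - c) + (x - a) * (x - b) * 1) x :=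
    (((hasDerivAt_id x).sub_const a).mul ((hasDerivAt_id x).sub_const b)).mul
      ((hasDerivAt_id x).sub_const c)
  have h := (hasDerivAt_id x).add h1
  simp only [Pi.add_def, id] at h
  rw [h.deriv]; ring

/-- a cubic map with three distinct real fixed points and
positive leading coefficient has at most one attracting fixed point. -/
theorem stmt_13 (a b c : ℝ) (hab : a ≠ b) (hac : a ≠ c) (hbc : b ≠ c) :
    let f : ℝ → ℝ := fun x => x + (x - a) * (x - b) * (x - c)
    ¬(|deriv f a| < 1 ∧ |deriv f b| < 1) ∧
    ¬(|deriv f a| < 1 ∧ |deriv f c| < 1) ∧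
    ¬(|deriv f b| < 1 ∧ |deriv f c| < 1) := by
  intro f
  have da : deriv f a = 1 + (a - b) * (a - c) := by
    rw [show f = (fun x => x + (x - a) * (x - b) * (x - c)) from rfl, cubic_deriv]; ring
  have db : deriv f b = 1 + (b - a) * (b - c) := by
    rw [show f = (fun x => x + (x - a) * (x - b) * (x - c)) from rfl, cubic_deriv]; ring
  have dc : deriv f c = 1 + (c - a) * (c - b) := by
    rw [show f = (fun x => x + (x - a) * (x - b) * (x - c)) from rfl, cubic_deriv]; ring
  rw [da, db, dc]
  refine ⟨fun ⟨h1, h2⟩ => ?_, fun ⟨h1, h2⟩ => ?_, fun ⟨h1, h2⟩ => ?_⟩ <;>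
    rw [abs_lt] at h1 h2 <;> nlinarith [h1.1, h1.2, h2.1, h2.2, sq_nonneg (a-b), sq_nonneg (a-c), sq_nonneg (b-c)]
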